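/- Let H₀ be a complex Hilbert space and A a unital subalgebra of B(H₀). On H := H₀ × H₀, for a₁, a₂ ∈ A let diag(a₁, a₂) denote the bounded operator (x, y) ↦ (a₁ x, a₂ y). Suppose K is a unitary and self-adjoint operator on H (a fundamental symmetry) such that K ∘ diag(a₁, a₂) ∘ K* = diag(a₂, a₁) for all a₁, a₂ ∈ A. Then there exists a unitary operator σ on H₀ commuting with every element of A such that K(x, y) = (σ y, σ* x) for all (x, y) ∈ H. -/

import Mathlib

open ContinuousLinearMap

/-- The diagonal operator `diag(a₁, a₂) : (x, y) ↦ (a₁ x, a₂ y)` on the Hilbert-space product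
`H₀ ×₂ H₀`. -/
noncomputable def diagOp {H₀ : Type*} [NormedAddCommGroup H₀] [InnerProductSpace ℂ H₀]
    (a₁ a₂ : H₀ →L[ℂ] H₀) : WithLp 2 (H₀ × H₀) →L[ℂ] WithLp 2 (H₀ × H₀) :=
  ((WithLp.prodContinuousLinearEquiv 2 ℂ H₀ H₀).symm :
      H₀ × H₀ →L[ℂ] WithLp 2 (H₀ × H₀)) ∘L
    (a₁.prodMap a₂) ∘L
    ((WithLp.prodContinuousLinearEquiv 2 ℂ H₀ H₀) :
      WithLp 2 (H₀ × H₀) →L[ℂ] H₀ × H₀)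

lemma diagOp_apply' {H₀ : Type*} [NormedAddCommGroup H₀] [InnerProductSpace ℂ H₀]
    (a₁ a₂ : H₀ →L[ℂ] H₀) (v : WithLp 2 (H₀ × H₀)) :
    diagOp a₁ a₂ v = (WithLp.prodContinuousLinearEquiv 2 ℂ H₀ H₀).symm
      (a₁ ((WithLp.prodContinuousLinearEquiv 2 ℂ H₀ H₀) v).1,
       a₂ ((WithLp.prodContinuousLinearEquiv 2 ℂ H₀ H₀) v).2) := rfl

/-- If a fundamental symmetry `K` (unitary and self-adjoint) on `H = H₀ × H₀`
implements the twist by grading, `K ∘ diag(a₁, a₂) ∘ K* = diag(a₂, a₁)` for all `a₁, a₂` in a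
unital subalgebra `A` of `B(H₀)`, then there is a unitary `σ` commuting with `A` such that
`K (x, y) = (σ y, σ* x)`. -/
theorem fundamental_twist_by_grading_form
    {H₀ : Type*} [NormedAddCommGroup H₀] [InnerProductSpace ℂ H₀] [CompleteSpace H₀]
    (A : Subalgebra ℂ (H₀ →L[ℂ] H₀))
    (K : WithLp 2 (H₀ × H₀) →L[ℂ] WithLp 2 (H₀ × H₀))
    (hK1 : K ∘L adjoint K = 1) (hK2 : adjoint K ∘L K = 1)
    (hKsa : adjoint K = K)
    (htw : ∀ a₁ ∈ A, ∀ a₂ ∈ A, K ∘L diagOp a₁ a₂ ∘L adjoint K = diagOp a₂ a₁) :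
    ∃ σ : H₀ →L[ℂ] H₀,
      (σ ∘L adjoint σ = 1 ∧ adjoint σ ∘L σ = 1) ∧
      (∀ a ∈ A, σ ∘L a = a ∘L σ) ∧
      ∀ x y : H₀,
        (WithLp.prodContinuousLinearEquiv 2 ℂ H₀ H₀)
            (K ((WithLp.prodContinuousLinearEquiv 2 ℂ H₀ H₀).symm (x, y))) =
          (σ y, adjoint σ x) := by
  classical
  rw [hKsa] at hK2
  set e := WithLp.prodContinuousLinearEquiv 2 ℂ H₀ H₀ with he
  have hKK : ∀ v, K (K v) = v := by
    intro v
    have := DFunLike.congr_fun hK2 v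
    simpa using this
  -- pointwise twist: K ∘ diagOp a₁ a₂ = diagOp a₂ a₁ ∘ K
  have htw' : ∀ a₁ ∈ A, ∀ a₂ ∈ A, ∀ v,
      K (diagOp a₁ a₂ v) = diagOp a₂ a₁ (K v) := by
    intro a₁ h₁ a₂ h₂ v
    have h := htw a₁ h₁ a₂ h₂
    rw [hKsa] at h
    have := DFunLike.congr_fun h (K v)
    simpa [hKK v] using this
  set f : H₀ → H₀ → H₀ × H₀ := fun x y => e (K (e.symm (x, y))) with hf
  -- structure relations
  have h10 : ∀ x y : H₀, K (e.symm (x, 0)) = e.symm (0, (f x y).2) := by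
    intro x y
    have := htw' 1 (one_mem A) 0 (zero_mem A) (e.symm (x, y))
    simpa [diagOp_apply', hf, he] using this
  have h01 : ∀ x y : H₀, K (e.symm (0, y)) = e.symm ((f x y).1, 0) := by
    intro x y
    have := htw' 0 (zero_mem A) 1 (one_mem A) (e.symm (x, y))
    simpa [diagOp_apply', hf, he] using this
  set σ : H₀ →L[ℂ] H₀ :=
    (ContinuousLinearMap.fst ℂ H₀ H₀) ∘L (e : WithLp 2 (H₀ × H₀) →L[ℂ] H₀ × H₀) ∘L K ∘L
      (e.symm : H₀ × H₀ →L[ℂ] WithLp 2 (H₀ × H₀)) ∘L (ContinuousLinearMap.inr ℂ H₀ H₀) with hσ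
  set τ : H₀ →L[ℂ] H₀ :=
    (ContinuousLinearMap.snd ℂ H₀ H₀) ∘L (e : WithLp 2 (H₀ × H₀) →L[ℂ] H₀ × H₀) ∘L K ∘L
      (e.symm : H₀ × H₀ →L[ℂ] WithLp 2 (H₀ × H₀)) ∘L (ContinuousLinearMap.inl ℂ H₀ H₀) with hτ
  have hσ_eq : ∀ y, σ y = (f 0 y).1 := fun y => rfl
  have hτ_eq : ∀ x, τ x = (f x 0).2 := fun x => rfl
  -- key pointwise formula
  have key : ∀ x y : H₀, K (e.symm (x, y)) = e.symm (σ y, τ x) := by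
    intro x y
    have hsplit : (e.symm (x, y) : WithLp 2 (H₀ × H₀)) = e.symm (x, 0) + e.symm (0, y) := by
      rw [← map_add]
      norm_num
    rw [hsplit, map_add, h10 x 0, h01 0 y, ← map_add]
    congr 1
    rw [← hσ_eq, ← hτ_eq]
    simp [Prod.ext_iff]
  have keyf : ∀ x y : H₀, f x y = (σ y, τ x) := by
    intro x y
    rw [hf]
    simp only [key x y]
    simp
  -- inner product computations: τ = adjoint σ
  have hinner : ∀ u v : WithLp 2 (H₀ × H₀),
      inner (𝕜 := ℂ) (K u) v = inner (𝕜 := ℂ) u (K v) := by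
    intro u v
    conv_lhs => rw [← hKsa]
    rw [adjoint_inner_left]
  have hτσ : τ = adjoint σ := by
    ext x
    apply ext_inner_right ℂ
    intro y
    have h := hinner (e.symm (x, 0)) (e.symm (0, y))
    rw [key x 0, key 0 y] at h
    have h1 : inner (𝕜 := ℂ) ((e.symm (σ 0, τ x) : WithLp 2 (H₀ × H₀))) (e.symm (0, y))
        = inner (𝕜 := ℂ) (τ x) y := by
      simp [WithLp.prod_inner_apply, he, WithLp.toLp_fst, WithLp.toLp_snd]
    have h2 : inner (𝕜 := ℂ) ((e.symm (x, 0) : WithLp 2 (H₀ × H₀))) (e.symm (σ y, τ 0))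
        = inner (𝕜 := ℂ) x (σ y) := by
      simp [WithLp.prod_inner_apply, he, WithLp.toLp_fst, WithLp.toLp_snd]
    rw [h1, h2] at h
    rw [h, adjoint_inner_left]
  -- unitarity
  have hστ : ∀ x, σ (τ x) = x ∧ ∀ y, τ (σ y) = y := by
    intro x
    constructor
    · have := hKK (e.symm (x, 0))
      rw [key x 0, key (σ 0) (τ x)] at this
      have := congrArg (fun v => (e v).1) this
      simpa using this
    · intro y
      have := hKK (e.symm (0, y))
      rw [key 0 y, key (σ y) (τ 0)] at this
      have := congrArg (fun v => (e v).2) this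
      simpa using this
  refine ⟨σ, ⟨?_, ?_⟩, ?_, ?_⟩
  · ext x
    simp [← hτσ, (hστ x).1]
  · ext y
    have := (hστ 0).2 y
    simp [← hτσ, this]
  · intro a ha
    ext y
    have h := htw' a ha a ha (e.symm (0, y))
    rw [diagOp_apply', diagOp_apply', key 0 y] at h
    simp only [he, WithLp.prodContinuousLinearEquiv_symm_apply,
      WithLp.prodContinuousLinearEquiv_apply, WithLp.toLp_fst, WithLp.toLp_snd,
      ContinuousLinearEquiv.apply_symm_apply, Equiv.apply_symm_apply, map_zero] at h
    have h2 := key 0 (a y)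
    simp only [he, WithLp.prodContinuousLinearEquiv_symm_apply] at h2
    rw [h2] at h
    have h3 := congrArg (fun v => (WithLp.equiv 2 (H₀ × H₀) v).1) h
    simpa [WithLp.toLp_fst] using h3
  · intro x y
    rw [key x y, hτσ]
    simp
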